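/- For all integers r, k ≥ 2: if r is odd then χ_r(k) ≤ (r^{k−1} − 1)/(r − 1) + 1, and if r is even then χ_r(k) ≤ (r^{k−3} − 1)/(r − 1) + r^{k−2} + 1. -/

import Mathlib

open Finset

/-- A monochromatic copy of `K_{[k,t]}` (complete graph on `k` vertices minus the
edges of a clique of order `t`) in color `i`, inside an `r`-edge-coloring `C` of `K_N`. -/
def HasMonoDropped {N r : ℕ} (C : Fin N → Fin N → Fin r) (i : Fin r) (k t : ℕ) : Prop :=
  ∃ S T : Finset (Fin N), T ⊆ S ∧ S.card = k ∧ T.card = t ∧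
    ∀ u ∈ S, ∀ v ∈ S, u ≠ v → ¬(u ∈ T ∧ v ∈ T) → C u v = i

/-- `R([k 0, t 0], …, [k (r-1), t (r-1)])`: the smallest `n` such that every
`r`-edge-coloring of `K_n` contains a monochromatic `K_{[k i, t i]}` in color `i`
for some `i`. -/
noncomputable def RamseyDropped (r : ℕ) (k t : Fin r → ℕ) : ℕ :=
  sInf {n | ∀ C : Fin n → Fin n → Fin r, (∀ u v, C u v = C v u) →
    ∃ i : Fin r, HasMonoDropped C i (k i) (t i)}

/-- The coloring `C` of `K_N` contains a `k`-clique whose induced coloring is a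
`χ_r`-coloring: there are a labeling `e` of `k` vertices and `φ` such that the edge
`{e i, e j}` with `i < j` has color `φ i`. -/
def HasChiClique {N r : ℕ} (k : ℕ) (C : Fin N → Fin N → Fin r) : Prop :=
  ∃ e : Fin k → Fin N, Function.Injective e ∧
    ∃ φ : Fin k → Fin r, ∀ i j : Fin k, i < j → C (e i) (e j) = φ i

/-- `n` is large enough for `χ_r(k)`: every `r`-edge-coloring of `K_N`, `N ≥ n`,
contains a `k`-clique whose induced coloring is a `χ_r`-coloring. -/
def ChiProp (r k n : ℕ) : Prop :=
  ∀ N, n ≤ N → ∀ C : Fin N → Fin N → Fin r, (∀ u v, C u v = C v u) → HasChiClique k C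

/-- `χ_r(k)`, the smallest `n` satisfying `ChiProp r k n`. -/
noncomputable def chiNum (r k : ℕ) : ℕ := sInf {n | ChiProp r k n}

/-- Any finset closed under a fixed-point-free involution has even cardinality. -/
lemma even_card_invol {α : Type*} [DecidableEq α] (f : α → α) (s : Finset α)
    (hmap : ∀ x ∈ s, f x ∈ s) (hinv : ∀ x ∈ s, f (f x) = x) (hne : ∀ x ∈ s, f x ≠ x) :
    Even s.card := by
  induction s using Finset.strongInduction with
  | _ s ih =>
    rcases s.eq_empty_or_nonempty with rfl | ⟨x, hx⟩
    · simp
    · have hfx : f x ∈ s := hmap x hx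
      have hfxne : f x ≠ x := hne x hx
      set t := (s.erase x).erase (f x) with ht
      have hsub : t ⊆ s := (Finset.erase_subset _ _).trans (Finset.erase_subset _ _)
      have hxt : x ∉ t := by simp [ht]
      have hts : t ⊂ s := (Finset.ssubset_iff_of_subset hsub).mpr ⟨x, hx, hxt⟩
      have hfxe : f x ∈ s.erase x := Finset.mem_erase.mpr ⟨hfxne, hfx⟩
      have htcard : t.card = s.card - 2 := by
        rw [ht, Finset.card_erase_of_mem hfxe, Finset.card_erase_of_mem hx]
        omega
      have hs2 : 2 ≤ s.card :=
        Finset.one_lt_card.mpr ⟨x, hx, f x, hfx, Ne.symm hfxne⟩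
      have hmem : ∀ y ∈ t, y ∈ s ∧ y ≠ x ∧ y ≠ f x := by
        intro y hy
        rw [ht, Finset.mem_erase, Finset.mem_erase] at hy
        exact ⟨hy.2.2, hy.2.1, hy.1⟩
      have hmap' : ∀ y ∈ t, f y ∈ t := by
        intro y hy
        obtain ⟨hys, hyx, hyfx⟩ := hmem y hy
        rw [ht, Finset.mem_erase, Finset.mem_erase]
        refine ⟨?_, ?_, hmap y hys⟩
        · intro h
          exact hyx (by rw [← hinv y hys, h, hinv x hx])
        · intro h
          exact hyfx (by rw [← hinv y hys, h])
      have heven := ih t hts (fun y hy => hmap' y hy)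
        (fun y hy => hinv y (hmem y hy).1) (fun y hy => hne y (hmem y hy).1)
      obtain ⟨c, hc⟩ := heven
      exact ⟨c + 1, by omega⟩

lemma chiProp_two (r : ℕ) (hr : 1 ≤ r) : ChiProp r 2 2 := by
  intro N hN C _
  refine ⟨fun i => ⟨i.val, by omega⟩, ?_, fun _ => C ⟨0, by omega⟩ ⟨1, by omega⟩, ?_⟩
  · intro a b hab
    have h2 := congrArg Fin.val hab
    exact Fin.ext h2
  · intro i j hij
    have hv : i.val < j.val := hij
    have hi2 := i.isLt
    have hj2 := j.isLt
    have hi : i = ⟨0, by omega⟩ := Fin.ext (show i.val = 0 by omega)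
    have hj : j = ⟨1, by omega⟩ := Fin.ext (show j.val = 1 by omega)
    rw [hi, hj]

lemma chiProp_three_even (r : ℕ) (hr : 2 ≤ r) (hre : Even r) : ChiProp r 3 (r + 1) := by
  intro N hN C hsym
  by_cases h : ∃ v u w : Fin N, u ≠ v ∧ w ≠ v ∧ u ≠ w ∧ C v u = C v w
  · obtain ⟨v, u, w, huv, hwv, huw, hc⟩ := h
    refine ⟨![v, u, w], ?_, ![C v u, C u w, C u w], ?_⟩
    · intro a b hab
      fin_cases a <;> fin_cases b <;> simp_all
    · intro i j hij
      fin_cases i <;> fin_cases j <;> simp_all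
  · exfalso
    push_neg at h
    -- every vertex sees each color at most once, hence exactly once
    have hinj : ∀ v : Fin N, Set.InjOn (C v) (Finset.univ.erase v) := by
      intro v u hu w hw hcc
      by_contra hne
      exact h v u w (Finset.mem_erase.mp hu).1 (Finset.mem_erase.mp hw).1 hne hcc
    have hcardle : ∀ v : Fin N, N - 1 ≤ r := by
      intro v
      have := Finset.card_le_card_of_injOn (C v)
        (fun a _ => Finset.mem_univ (C v a)) (hinj v)
      simpa using this
    have h0 : 0 < N := by omega
    have hNeq : N = r + 1 := le_antisymm (by have := hcardle ⟨0, h0⟩; omega) hN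
    have hsurj : ∀ (v : Fin N) (c : Fin r), ∃ u, u ≠ v ∧ C v u = c := by
      intro v c
      have himg : (Finset.univ.erase v).image (C v) = Finset.univ := by
        apply Finset.eq_univ_of_card
        rw [Finset.card_image_of_injOn (hinj v)]
        simp [hNeq]
      have : c ∈ (Finset.univ.erase v).image (C v) := himg ▸ Finset.mem_univ c
      obtain ⟨u, hu, hcu⟩ := Finset.mem_image.mp this
      exact ⟨u, (Finset.mem_erase.mp hu).1, hcu⟩
    set c : Fin r := ⟨0, by omega⟩ with hc
    let f : Fin N → Fin N := fun v => (hsurj v c).choose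
    have hf1 : ∀ v, f v ≠ v := fun v => (hsurj v c).choose_spec.1
    have hf2 : ∀ v, C v (f v) = c := fun v => (hsurj v c).choose_spec.2
    have hfinv : ∀ v, f (f v) = v := by
      intro v
      have h1 : C (f v) v = c := by rw [hsym]; exact hf2 v
      have h2 : C (f v) (f (f v)) = c := hf2 (f v)
      refine hinj (f v) ?_ ?_ (h2.trans h1.symm)
      · simp [hf1 (f v)]
      · simp [Ne.symm (hf1 v)]
    have heven : Even N := by
      have := even_card_invol f (Finset.univ : Finset (Fin N))
        (fun x _ => Finset.mem_univ _) (fun x _ => hfinv x) (fun x _ => hf1 x)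
      simpa using this
    rw [hNeq] at heven
    obtain ⟨a, ha⟩ := hre
    obtain ⟨b, hb⟩ := heven
    omega

lemma chiProp_succ (r k m : ℕ) (hr : 1 ≤ r) (hm : 1 ≤ m) (H : ChiProp r k m) :
    ChiProp r (k + 1) (r * (m - 1) + 2) := by
  intro N hN C hsym
  have hN2 : 2 ≤ N := by nlinarith [Nat.zero_le (r * (m - 1))]
  set v : Fin N := ⟨0, by omega⟩ with hv
  have hvmem : v ∈ (Finset.univ : Finset (Fin N)) := Finset.mem_univ v
  have hcard : (Finset.univ : Finset (Fin r)).card * (m - 1) <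
      (Finset.univ.erase v).card := by
    rw [Finset.card_erase_of_mem hvmem]
    simp only [Finset.card_univ, Fintype.card_fin]
    omega
  obtain ⟨i, -, hi⟩ := Finset.exists_lt_card_fiber_of_mul_lt_card_of_maps_to
    (fun u (_ : u ∈ Finset.univ.erase v) => Finset.mem_univ (C v u)) hcard
  set S := (Finset.univ.erase v).filter (fun u => C v u = i) with hS
  have hSm : m ≤ S.card := by omega
  have hvS : v ∉ S := by simp [hS]
  let ι : Fin S.card → Fin N := fun a => ((S.orderIsoOfFin rfl) a : Fin N)
  have hιmem : ∀ a, ι a ∈ S := fun a => ((S.orderIsoOfFin rfl) a).2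
  have hιinj : Function.Injective ι := fun a b hab =>
    (S.orderIsoOfFin rfl).injective (Subtype.ext hab)
  obtain ⟨e, he, φ, hφ⟩ := H S.card hSm (fun a b => C (ι a) (ι b))
    (fun a b => hsym (ι a) (ι b))
  refine ⟨Fin.cons v (fun j => ι (e j)), ?_, Fin.cons i φ, ?_⟩
  · intro a b hab
    rcases Fin.eq_zero_or_eq_succ a with rfl | ⟨a', rfl⟩ <;>
      rcases Fin.eq_zero_or_eq_succ b with rfl | ⟨b', rfl⟩
    · rfl
    · simp only [Fin.cons_zero, Fin.cons_succ] at hab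
      exact absurd (hab ▸ hιmem (e b')) hvS
    · simp only [Fin.cons_zero, Fin.cons_succ] at hab
      exact absurd (hab ▸ hιmem (e a')) hvS
    · simp only [Fin.cons_succ] at hab
      exact congrArg Fin.succ (he (hιinj hab))
  · intro a b hlt
    rcases Fin.eq_zero_or_eq_succ a with rfl | ⟨a', rfl⟩ <;>
      rcases Fin.eq_zero_or_eq_succ b with rfl | ⟨b', rfl⟩
    · exact absurd hlt (lt_irrefl _)
    · simp only [Fin.cons_zero, Fin.cons_succ]
      have := hιmem (e b')
      rw [hS, Finset.mem_filter] at this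
      exact this.2
    · exact absurd hlt (Fin.not_lt_zero _)
    · simp only [Fin.cons_succ]
      exact hφ a' b' (by simpa using hlt)

lemma chiProp_odd_aux (r : ℕ) (hr : 2 ≤ r) :
    ∀ m : ℕ, ChiProp r (m + 2) ((∑ i ∈ Finset.range (m + 1), r ^ i) + 1) := by
  intro m
  induction m with
  | zero => simpa using chiProp_two r (by omega)
  | succ n ih =>
    have h := chiProp_succ r (n + 2) _ (by omega) (by omega) ih
    have he : (∑ i ∈ Finset.range (n + 2), r ^ i) + 1 =
        r * ((∑ i ∈ Finset.range (n + 1), r ^ i) + 1 - 1) + 2 := by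
      rw [geom_sum_succ, Nat.add_sub_cancel]
    rw [show n + 1 + 2 = n + 2 + 1 from rfl, he]
    exact h

lemma chiProp_even_aux (r : ℕ) (hr : 2 ≤ r) (hre : Even r) :
    ∀ m : ℕ, ChiProp r (m + 3) ((∑ i ∈ Finset.range m, r ^ i) + r ^ (m + 1) + 1) := by
  intro m
  induction m with
  | zero => simpa using chiProp_three_even r hr hre
  | succ n ih =>
    have h := chiProp_succ r (n + 3) _ (by omega) (by omega) ih
    have he : (∑ i ∈ Finset.range (n + 1), r ^ i) + r ^ (n + 2) + 1 =
        r * ((∑ i ∈ Finset.range n, r ^ i) + r ^ (n + 1) + 1 - 1) + 2 := by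
      rw [geom_sum_succ, Nat.add_sub_cancel, pow_succ]
      ring
    rw [show n + 1 + 3 = n + 3 + 1 from rfl, he]
    exact h

/-- Proposition 2: for r, k ≥ 2, χ_r(k) ≤ (r^{k−1} − 1)/(r − 1) + 1 if r is odd,
and χ_r(k) ≤ (r^{k−3} − 1)/(r − 1) + r^{k−2} + 1 if r is even. -/
theorem stmt16 (r k : ℕ) (hr : 2 ≤ r) (hk : 2 ≤ k) :
    (Odd r → chiNum r k ≤ (r ^ (k - 1) - 1) / (r - 1) + 1) ∧
    (Even r → chiNum r k ≤ (r ^ (k - 3) - 1) / (r - 1) + r ^ (k - 2) + 1) := by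
  constructor
  · intro _
    obtain ⟨m, rfl⟩ : ∃ m, k = m + 2 := ⟨k - 2, by omega⟩
    calc chiNum r (m + 2) ≤ (∑ i ∈ Finset.range (m + 1), r ^ i) + 1 :=
          Nat.sInf_le (chiProp_odd_aux r hr m)
      _ = (r ^ (m + 2 - 1) - 1) / (r - 1) + 1 := by
          simp only [show m + 2 - 1 = m + 1 by omega, Nat.geomSum_eq hr]
  · intro hre
    by_cases hk3 : k = 2
    · subst hk3
      have h2 : chiNum r 2 ≤ 2 := Nat.sInf_le (chiProp_two r (by omega))
      simpa using h2
    · obtain ⟨m, rfl⟩ : ∃ m, k = m + 3 := ⟨k - 3, by omega⟩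
      calc chiNum r (m + 3) ≤ (∑ i ∈ Finset.range m, r ^ i) + r ^ (m + 1) + 1 :=
            Nat.sInf_le (chiProp_even_aux r hr hre m)
        _ = (r ^ (m + 3 - 3) - 1) / (r - 1) + r ^ (m + 3 - 2) + 1 := by
            simp only [show m + 3 - 3 = m by omega, show m + 3 - 2 = m + 1 by omega,
              Nat.geomSum_eq hr]
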